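/- For all natural numbers x and y, the partition ideal I_(x,y) of all partitions λ with λ_{x+1} ≥ y+1 is Schur prime; conversely, every nonempty Schur prime partition ideal equals I_(x,y) for some natural numbers x and y. -/

import Mathlib

/-- A partition: a weakly decreasing sequence `part 0 ≥ part 1 ≥ ⋯` of natural
numbers that is eventually zero.  `part i` is the `(i+1)`-st part `λ_{i+1}`
(so we use 0-based indexing throughout). -/
structure Partition' where
  part : ℕ → ℕ
  antitone : ∀ ⦃i j : ℕ⦄, i ≤ j → part j ≤ part i
  eventually_zero : ∃ N, ∀ i, N ≤ i → part i = 0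

/-- `ν` is a monomial constituent of `m_λ · m_μ`: there is a permutation `σ` of
the indices such that `ν` is the weakly decreasing rearrangement (witnessed by
the bijection `τ`) of the sequence `i ↦ λ_i + μ_{σ i}`. -/
def IsMonomialConstituent (l m n : Partition') : Prop :=
  ∃ σ τ : Equiv.Perm ℕ, ∀ i, n.part i = l.part (τ i) + m.part (σ (τ i))

/-- The cell in row `i`, column `j` (0-indexed) belongs to the skew diagram `ν/λ`. -/
def InSkew (l n : Partition') (i j : ℕ) : Prop := l.part i ≤ j ∧ j < n.part i

/-- `T` is a Littlewood–Richardson tableau of shape `ν/λ` and type `μ`: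
its entries (on the cells of `ν/λ`) are positive integers, weakly increasing
along rows and strictly increasing down columns; for each `k ≥ 0` the entry
`k+1` occurs exactly `μ_{k+1}` times; and its reverse reading word (rows top to
bottom, each row right to left) is a lattice permutation, i.e. in every prefix
(the cells in rows `< r` together with the cells of row `r` in columns `≥ c`)
the entry `k+1` occurs at least as often as the entry `k+2`. -/
def IsLRTableau (l n m : Partition') (T : ℕ → ℕ → ℕ) : Prop :=
  (∀ i j, InSkew l n i j → 1 ≤ T i j) ∧
  (∀ i j j', InSkew l n i j → InSkew l n i j' → j ≤ j' → T i j ≤ T i j') ∧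
  (∀ i i' j, InSkew l n i j → InSkew l n i' j → i < i' → T i j < T i' j) ∧
  (∀ k : ℕ, Set.ncard {p : ℕ × ℕ | InSkew l n p.1 p.2 ∧ T p.1 p.2 = k + 1} = m.part k) ∧
  (∀ r c k : ℕ,
    Set.ncard {p : ℕ × ℕ | InSkew l n p.1 p.2 ∧ (p.1 < r ∨ (p.1 = r ∧ c ≤ p.2)) ∧
        T p.1 p.2 = k + 2} ≤
    Set.ncard {p : ℕ × ℕ | InSkew l n p.1 p.2 ∧ (p.1 < r ∨ (p.1 = r ∧ c ≤ p.2)) ∧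
        T p.1 p.2 = k + 1})

/-- `ν` is a Schur constituent of `s_λ · s_μ`: `λ ⊆ ν` and there is a
Littlewood–Richardson tableau of shape `ν/λ` and type `μ`. -/
def IsSchurConstituent (l m n : Partition') : Prop :=
  (∀ i, l.part i ≤ n.part i) ∧ ∃ T : ℕ → ℕ → ℕ, IsLRTableau l n m T

/-- A partition ideal: upward closed for the containment order. -/
def IsPartitionIdeal (I : Set Partition') : Prop :=
  ∀ l m : Partition', l ∈ I → (∀ i, l.part i ≤ m.part i) → m ∈ I

/-- A set of partitions is Schur prime if it is not everything and whenever
every Schur constituent of `s_λ · s_μ` lies in it, `λ` or `μ` lies in it. -/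
def IsSchurPrime (I : Set Partition') : Prop :=
  I ≠ Set.univ ∧ ∀ l m : Partition',
    (∀ n : Partition', IsSchurConstituent l m n → n ∈ I) → l ∈ I ∨ m ∈ I

namespace SchurPrimeAux

/-! ### Conjugate machinery -/

noncomputable def conj (a : ℕ → ℕ) (j : ℕ) : ℕ := sInf {n | a n ≤ j}

structure Nice (a : ℕ → ℕ) : Prop where
  anti : ∀ ⦃i j : ℕ⦄, i ≤ j → a j ≤ a i
  ez : ∃ N, ∀ i, N ≤ i → a i = 0

theorem Nice.conj_le_iff {a} (h : Nice a) {i j : ℕ} : conj a j ≤ i ↔ a i ≤ j := by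
  obtain ⟨N, hN⟩ := h.ez
  have hne : {n | a n ≤ j}.Nonempty := ⟨N, by simp [hN N le_rfl]⟩
  constructor
  · intro hle
    have hm := Nat.sInf_mem hne
    exact le_trans (h.anti hle) hm
  · exact fun hm => Nat.sInf_le hm

theorem Nice.lt_conj_iff {a} (h : Nice a) {i j : ℕ} : i < conj a j ↔ j < a i := by
  rw [← not_le, ← not_le]; exact not_congr h.conj_le_iff

theorem Nice.conj_anti {a} (h : Nice a) : ∀ ⦃i j : ℕ⦄, i ≤ j → conj a j ≤ conj a i := by
  intro i j hij
  have h0 : a (conj a i) ≤ i := h.conj_le_iff.mp le_rfl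
  exact h.conj_le_iff.mpr (le_trans h0 hij)

theorem Nice.conj_nice {a} (h : Nice a) : Nice (conj a) :=
  ⟨h.conj_anti, ⟨a 0, fun i hi => Nat.le_zero.mp (h.conj_le_iff.mpr hi)⟩⟩

def Partition'.nice (l : Partition') : Nice l.part := ⟨l.antitone, l.eventually_zero⟩

/-! ### Tails -/

def tpart (x : ℕ) (l : Partition') : ℕ → ℕ := fun t => l.part (x + t)

theorem tpart_nice (x : ℕ) (l : Partition') : Nice (tpart x l) := by
  constructor
  · intro i j hij; exact l.antitone (by omega)
  · obtain ⟨N, hN⟩ := l.eventually_zero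
    exact ⟨N, fun i hi => hN _ (by omega)⟩

noncomputable def gf (x : ℕ) (l m : Partition') : ℕ → ℕ :=
  fun j => conj (tpart x l) j + conj (tpart x m) j

theorem gf_nice (x : ℕ) (l m : Partition') : Nice (gf x l m) := by
  constructor
  · intro i j hij
    exact Nat.add_le_add ((tpart_nice x l).conj_anti hij) ((tpart_nice x m).conj_anti hij)
  · refine ⟨max (l.part x) (m.part x), fun j hj => ?_⟩
    have h1 : conj (tpart x l) j ≤ 0 :=
      (tpart_nice x l).conj_le_iff.mpr (by simp [tpart]; omega)
    have h2 : conj (tpart x m) j ≤ 0 :=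
      (tpart_nice x m).conj_le_iff.mpr (by simp [tpart]; omega)
    simp [gf]; omega

noncomputable def nup (x : ℕ) (l m : Partition') : ℕ → ℕ :=
  fun i => if i < x then l.part i + m.part i else conj (gf x l m) (i - x)

theorem nup_tail_le_max (x : ℕ) (l m : Partition') (t : ℕ) :
    conj (gf x l m) t ≤ max (l.part x) (m.part x) := by
  apply (gf_nice x l m).conj_le_iff.mpr
  have h1 : conj (tpart x l) (max (l.part x) (m.part x)) ≤ 0 :=
    (tpart_nice x l).conj_le_iff.mpr (by simp [tpart])
  have h2 : conj (tpart x m) (max (l.part x) (m.part x)) ≤ 0 :=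
    (tpart_nice x m).conj_le_iff.mpr (by simp [tpart])
  simp [gf]; omega

theorem le_nup_tail_l (x : ℕ) (l m : Partition') (t : ℕ) :
    l.part (x + t) ≤ conj (gf x l m) t := by
  by_contra hc
  push_neg at hc
  have hj : (conj (gf x l m) t) < tpart x l t := hc
  have h1 : t < conj (tpart x l) (conj (gf x l m) t) := (tpart_nice x l).lt_conj_iff.mpr hj
  have h2 : t < gf x l m (conj (gf x l m) t) := lt_of_lt_of_le h1 (Nat.le_add_right _ _)
  have h3 : conj (gf x l m) t < conj (gf x l m) t := (gf_nice x l m).lt_conj_iff.mpr h2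
  omega

theorem le_nup_tail_m (x : ℕ) (l m : Partition') (t : ℕ) :
    m.part (x + t) ≤ conj (gf x l m) t := by
  by_contra hc
  push_neg at hc
  have h1 : t < conj (tpart x m) (conj (gf x l m) t) := (tpart_nice x m).lt_conj_iff.mpr hc
  have h2 : t < gf x l m (conj (gf x l m) t) := lt_of_lt_of_le h1 (Nat.le_add_left _ _)
  have h3 : conj (gf x l m) t < conj (gf x l m) t := (gf_nice x l m).lt_conj_iff.mpr h2
  omega

noncomputable def nuP (x : ℕ) (l m : Partition') : Partition' where
  part := nup x l m
  antitone := by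
    intro i j hij
    by_cases hi : i < x
    · by_cases hj : j < x
      · simp only [nup, if_pos hi, if_pos hj]
        exact Nat.add_le_add (l.antitone hij) (m.antitone hij)
      · simp only [nup, if_pos hi, if_neg hj]
        have h1 := nup_tail_le_max x l m (j - x)
        have h2 : l.part x ≤ l.part i := l.antitone (by omega)
        have h3 : m.part x ≤ m.part i := m.antitone (by omega)
        omega
    · have hj : ¬ j < x := by omega
      simp only [nup, if_neg hi, if_neg hj]
      exact (gf_nice x l m).conj_nice.anti (by omega)
  eventually_zero := by
    refine ⟨x + gf x l m 0, fun i hi => ?_⟩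
    have hx : ¬ i < x := by omega
    simp only [nup, if_neg hx]
    exact Nat.le_zero.mp ((gf_nice x l m).conj_le_iff.mpr (by omega))

theorem nuP_part_x (x : ℕ) (l m : Partition') :
    (nuP x l m).part x = max (l.part x) (m.part x) := by
  have h0 : (nuP x l m).part x = conj (gf x l m) 0 := by
    simp [nuP, nup]
  rw [h0]
  refine le_antisymm (nup_tail_le_max x l m 0) (max_le ?_ ?_)
  · have := le_nup_tail_l x l m 0; simpa using this
  · have := le_nup_tail_m x l m 0; simpa using this

theorem le_nuP (x : ℕ) (l m : Partition') (i : ℕ) : l.part i ≤ (nuP x l m).part i := by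
  by_cases hi : i < x
  · simp [nuP, nup, if_pos hi]
  · have h := le_nup_tail_l x l m (i - x)
    have hxi : x + (i - x) = i := by omega
    rw [hxi] at h
    simpa [nuP, nup, if_neg hi] using h

end SchurPrimeAux

namespace SchurPrimeAux

noncomputable def Tf (x : ℕ) (l : Partition') : ℕ → ℕ → ℕ :=
  fun i j => if i < x then i + 1 else i + 1 - conj (tpart x l) j

theorem skew_front_iff (x : ℕ) (l m : Partition') {i j : ℕ} (hi : i < x) :
    InSkew l (nuP x l m) i j ↔ l.part i ≤ j ∧ j < l.part i + m.part i := by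
  simp [InSkew, nuP, nup, if_pos hi]

theorem skew_tail_iff (x : ℕ) (l m : Partition') {i j : ℕ} (hi : x ≤ i) :
    InSkew l (nuP x l m) i j ↔
      conj (tpart x l) j ≤ i - x ∧ i - x < gf x l m j := by
  have hx : ¬ i < x := by omega
  have h1 : l.part i ≤ j ↔ conj (tpart x l) j ≤ i - x := by
    rw [(tpart_nice x l).conj_le_iff]
    have : x + (i - x) = i := by omega
    simp [tpart, this]
  have h2 : j < conj (gf x l m) (i - x) ↔ i - x < gf x l m j :=
    (gf_nice x l m).lt_conj_iff
  simp only [InSkew, nuP, nup, if_neg hx]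
  rw [h1, h2]

theorem cell_front_iff (x : ℕ) (l m : Partition') {i j k : ℕ} (hk : k < x) :
    (InSkew l (nuP x l m) i j ∧ Tf x l i j = k + 1) ↔
      (i = k ∧ l.part k ≤ j ∧ j < l.part k + m.part k) := by
  constructor
  · rintro ⟨hsk, hT⟩
    by_cases hi : i < x
    · have hik : i = k := by simp only [Tf, if_pos hi] at hT; omega
      subst hik
      exact ⟨rfl, (skew_front_iff x l m hi).mp hsk⟩
    · exfalso
      rcases (skew_tail_iff x l m (by omega)).mp hsk with ⟨h1, _⟩
      simp only [Tf, if_neg hi] at hT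
      omega
  · rintro ⟨rfl, h1, h2⟩
    exact ⟨(skew_front_iff x l m hk).mpr ⟨h1, h2⟩, by simp [Tf, if_pos hk]⟩

theorem cell_tail_iff (x : ℕ) (l m : Partition') (s : ℕ) {i j : ℕ} :
    (InSkew l (nuP x l m) i j ∧ Tf x l i j = (x + s) + 1) ↔
      (i = x + s + conj (tpart x l) j ∧ j < m.part (x + s)) := by
  constructor
  · rintro ⟨hsk, hT⟩
    by_cases hi : i < x
    · exfalso; simp only [Tf, if_pos hi] at hT; omega
    · rcases (skew_tail_iff x l m (by omega)).mp hsk with ⟨h1, h2⟩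
      simp only [Tf, if_neg hi] at hT
      refine ⟨by omega, ?_⟩
      have hs : s < conj (tpart x m) j := by simp only [gf] at h2; omega
      have := (tpart_nice x m).lt_conj_iff.mp hs
      simpa [tpart] using this
  · rintro ⟨hik, hj⟩
    have hs : s < conj (tpart x m) j :=
      (tpart_nice x m).lt_conj_iff.mpr (by simpa [tpart] using hj)
    subst hik
    constructor
    · rw [skew_tail_iff x l m (by omega)]
      refine ⟨by omega, ?_⟩
      simp only [gf]; omega
    · simp only [Tf, if_neg (show ¬ x + s + conj (tpart x l) j < x by omega)]
      omega

theorem skew_finite (l n : Partition') (S : Set (ℕ × ℕ))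
    (hS : ∀ p ∈ S, InSkew l n p.1 p.2) : S.Finite := by
  obtain ⟨N, hN⟩ := n.eventually_zero
  apply Set.Finite.subset (Set.Finite.prod (Set.finite_Iio N) (Set.finite_Iio (n.part 0)))
  rintro ⟨i, j⟩ hp
  have h1 : l.part i ≤ j := (hS (i, j) hp).1
  have h2 : j < n.part i := (hS (i, j) hp).2
  refine Set.mem_prod.mpr ⟨?_, ?_⟩
  · simp only [Set.mem_Iio]
    by_contra hc
    push_neg at hc
    have := hN i hc
    omega
  · simp only [Set.mem_Iio]
    exact lt_of_lt_of_le h2 (n.antitone (Nat.zero_le i))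

theorem ncard_Iio (n : ℕ) : (Set.Iio n).ncard = n := by
  rw [← Finset.coe_Iio, Set.ncard_coe_finset]; simp

theorem ncard_Ico (a b : ℕ) : (Set.Ico a b).ncard = b - a := by
  rw [← Finset.coe_Ico, Set.ncard_coe_finset]; simp

theorem nu_constituent (x : ℕ) (l m : Partition') :
    IsSchurConstituent l m (nuP x l m) := by
  refine ⟨le_nuP x l m, Tf x l, ?_, ?_, ?_, ?_, ?_⟩
  · -- positivity
    intro i j hsk
    by_cases hi : i < x
    · simp [Tf, if_pos hi]
    · rcases (skew_tail_iff x l m (by omega)).mp hsk with ⟨h1, _⟩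
      simp only [Tf, if_neg hi]
      omega
  · -- rows weakly increasing
    intro i j j' hsk hsk' hjj
    by_cases hi : i < x
    · simp [Tf, if_pos hi]
    · simp only [Tf, if_neg hi]
      have := (tpart_nice x l).conj_anti hjj
      omega
  · -- columns strictly increasing
    intro i i' j hsk hsk' hii
    by_cases hi' : i' < x
    · have hi : i < x := by omega
      simp only [Tf, if_pos hi, if_pos hi']
      omega
    · rcases (skew_tail_iff x l m (by omega)).mp hsk' with ⟨h1', _⟩
      by_cases hi : i < x
      · simp only [Tf, if_pos hi, if_neg hi']
        omega
      · rcases (skew_tail_iff x l m (by omega)).mp hsk with ⟨h1, _⟩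
        simp only [Tf, if_neg hi, if_neg hi']
        omega
  · -- content
    intro k
    by_cases hk : k < x
    · have hset : {p : ℕ × ℕ | InSkew l (nuP x l m) p.1 p.2 ∧ Tf x l p.1 p.2 = k + 1} =
          (fun j => ((k, j) : ℕ × ℕ)) '' Set.Ico (l.part k) (l.part k + m.part k) := by
        ext ⟨i, j⟩
        simp only [Set.mem_setOf_eq, Set.mem_image, Set.mem_Ico, Prod.mk.injEq]
        rw [cell_front_iff x l m hk]
        constructor
        · rintro ⟨rfl, h1, h2⟩
          exact ⟨j, ⟨h1, h2⟩, rfl, rfl⟩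
        · rintro ⟨j', ⟨h1, h2⟩, rfl, rfl⟩
          exact ⟨rfl, h1, h2⟩
      rw [hset]
      rw [Set.ncard_image_of_injOn
        (fun a _ b _ hab => by simpa using congrArg Prod.snd hab)]
      rw [ncard_Ico]; omega
    · have hks : k + 1 = (x + (k - x)) + 1 := by omega
      have hset : {p : ℕ × ℕ | InSkew l (nuP x l m) p.1 p.2 ∧ Tf x l p.1 p.2 = k + 1} =
          (fun j => ((x + (k - x) + conj (tpart x l) j, j) : ℕ × ℕ)) ''
            Set.Iio (m.part (x + (k - x))) := by
        ext ⟨i, j⟩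
        simp only [Set.mem_setOf_eq, Set.mem_image, Set.mem_Iio, Prod.mk.injEq]
        rw [hks, cell_tail_iff x l m (k - x)]
        constructor
        · rintro ⟨rfl, h2⟩
          exact ⟨j, h2, rfl, rfl⟩
        · rintro ⟨j', h2, rfl, rfl⟩
          exact ⟨rfl, h2⟩
      rw [hset]
      rw [Set.ncard_image_of_injOn
        (fun a _ b _ hab => by simpa using congrArg Prod.snd hab)]
      rw [ncard_Iio]
      congr 1
      omega
  · -- lattice condition
    intro r c k
    have hfin : {p : ℕ × ℕ | InSkew l (nuP x l m) p.1 p.2 ∧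
        (p.1 < r ∨ (p.1 = r ∧ c ≤ p.2)) ∧ Tf x l p.1 p.2 = k + 1}.Finite :=
      skew_finite l (nuP x l m) _ (fun p hp => hp.1)
    by_cases hc1 : k + 2 ≤ x
    · -- front case: map to row k
      refine Set.ncard_le_ncard_of_injOn
        (fun p => ((k, p.2 - l.part (k + 1) + l.part k) : ℕ × ℕ)) ?_ ?_ hfin
      · rintro ⟨i, j⟩ hp
        simp only [Set.mem_setOf_eq] at hp
        obtain ⟨hsk, hpref, hT⟩ := hp
        have hT' : Tf x l i j = (k + 1) + 1 := by omega
        obtain ⟨hik, h1, h2⟩ := (cell_front_iff x l m (show k + 1 < x by omega)).mp ⟨hsk, hT'⟩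
        have hmm : m.part (k + 1) ≤ m.part k := m.antitone (by omega)
        have hc2 := (cell_front_iff x l m (show k < x by omega)).mpr
          (⟨rfl, by omega, by omega⟩ :
            k = k ∧ l.part k ≤ j - l.part (k + 1) + l.part k ∧
              j - l.part (k + 1) + l.part k < l.part k + m.part k)
        simp only [Set.mem_setOf_eq]
        exact ⟨hc2.1, by left; omega, hc2.2⟩
      · rintro ⟨i, j⟩ hp ⟨i', j'⟩ hp' he
        simp only [Set.mem_setOf_eq] at hp hp'
        simp only [Prod.mk.injEq] at he
        obtain ⟨hsk, hpref, hT⟩ := hp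
        obtain ⟨hsk', hpref', hT'⟩ := hp'
        have h1 := (cell_front_iff x l m (show k + 1 < x by omega)).mp
          ⟨hsk, show Tf x l i j = (k + 1) + 1 by omega⟩
        have h2 := (cell_front_iff x l m (show k + 1 < x by omega)).mp
          ⟨hsk', show Tf x l i' j' = (k + 1) + 1 by omega⟩
        simp only [Prod.mk.injEq]
        omega
    · by_cases hc2 : k + 1 = x
      · -- boundary case
        refine Set.ncard_le_ncard_of_injOn
          (fun p => ((x - 1, l.part (x - 1) + p.2) : ℕ × ℕ)) ?_ ?_ hfin
        · rintro ⟨i, j⟩ hp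
          simp only [Set.mem_setOf_eq] at hp
          obtain ⟨hsk, hpref, hT⟩ := hp
          have hT' : Tf x l i j = (x + 0) + 1 := by omega
          obtain ⟨hik, hj⟩ := (cell_tail_iff x l m 0).mp ⟨hsk, hT'⟩
          have hmm : m.part (x + 0) ≤ m.part (x - 1) := m.antitone (by omega)
          have hcf := (cell_front_iff x l m (show x - 1 < x by omega)).mpr
            (⟨rfl, by omega, by omega⟩ :
              x - 1 = x - 1 ∧ l.part (x - 1) ≤ l.part (x - 1) + j ∧
                l.part (x - 1) + j < l.part (x - 1) + m.part (x - 1))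
          simp only [Set.mem_setOf_eq]
          refine ⟨hcf.1, by left; omega, by have := hcf.2; omega⟩
        · rintro ⟨i, j⟩ hp ⟨i', j'⟩ hp' he
          simp only [Set.mem_setOf_eq] at hp hp'
          simp only [Prod.mk.injEq] at he
          obtain ⟨hsk, hpref, hT⟩ := hp
          obtain ⟨hsk', hpref', hT'⟩ := hp'
          obtain ⟨hik, hj⟩ := (cell_tail_iff x l m 0).mp
            ⟨hsk, show Tf x l i j = (x + 0) + 1 by omega⟩
          obtain ⟨hik', hj'⟩ := (cell_tail_iff x l m 0).mp
            ⟨hsk', show Tf x l i' j' = (x + 0) + 1 by omega⟩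
          have hjj : j = j' := by omega
          subst hjj
          simp only [Prod.mk.injEq, and_true]
          omega
      · -- tail case : x ≤ k
        have hkx : x ≤ k := by omega
        refine Set.ncard_le_ncard_of_injOn
          (fun p => ((p.1 - 1, p.2) : ℕ × ℕ)) ?_ ?_ hfin
        · rintro ⟨i, j⟩ hp
          simp only [Set.mem_setOf_eq] at hp
          obtain ⟨hsk, hpref, hT⟩ := hp
          have hT' : Tf x l i j = (x + (k + 1 - x)) + 1 := by omega
          obtain ⟨hik, hj⟩ := (cell_tail_iff x l m (k + 1 - x)).mp ⟨hsk, hT'⟩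
          have hmm : m.part (x + (k + 1 - x)) ≤ m.part (x + (k - x)) :=
            m.antitone (by omega)
          have hct := (cell_tail_iff x l m (k - x)).mpr
            (⟨by omega, by omega⟩ :
              i - 1 = x + (k - x) + conj (tpart x l) j ∧ j < m.part (x + (k - x)))
          simp only [Set.mem_setOf_eq]
          refine ⟨hct.1, by left; omega, by have := hct.2; omega⟩
        · rintro ⟨i, j⟩ hp ⟨i', j'⟩ hp' he
          simp only [Set.mem_setOf_eq] at hp hp'
          simp only [Prod.mk.injEq] at he
          obtain ⟨hsk, hpref, hT⟩ := hp
          obtain ⟨hsk', hpref', hT'⟩ := hp'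
          obtain ⟨hik, hj⟩ := (cell_tail_iff x l m (k + 1 - x)).mp
            ⟨hsk, show Tf x l i j = (x + (k + 1 - x)) + 1 by omega⟩
          obtain ⟨hik', hj'⟩ := (cell_tail_iff x l m (k + 1 - x)).mp
            ⟨hsk', show Tf x l i' j' = (x + (k + 1 - x)) + 1 by omega⟩
          have hjj : j = j' := by omega
          subst hjj
          simp only [Prod.mk.injEq, and_true]
          omega

end SchurPrimeAux

namespace SchurPrimeAux

def zeroPart : Partition' := ⟨fun _ => 0, fun _ _ _ => le_rfl, ⟨0, fun _ _ => rfl⟩⟩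

/-- In an LR tableau, every entry `k+1` lies in a row of index `≥ k`. -/
theorem entry_row_ge (l n m : Partition') (T : ℕ → ℕ → ℕ) (h : IsLRTableau l n m T) :
    ∀ k i j, InSkew l n i j → T i j = k + 1 → k ≤ i := by
  intro k
  induction k with
  | zero => intro i j _ _; exact Nat.zero_le i
  | succ k ih =>
    intro i j hsk hT
    have hlat := h.2.2.2.2 i j k
    have hne : ({p : ℕ × ℕ | InSkew l n p.1 p.2 ∧ (p.1 < i ∨ (p.1 = i ∧ j ≤ p.2)) ∧
        T p.1 p.2 = k + 2}).Nonempty := ⟨(i, j), hsk, Or.inr ⟨rfl, le_rfl⟩, hT⟩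
    have hfin2 : ({p : ℕ × ℕ | InSkew l n p.1 p.2 ∧ (p.1 < i ∨ (p.1 = i ∧ j ≤ p.2)) ∧
        T p.1 p.2 = k + 2}).Finite := skew_finite l n _ (fun p hp => hp.1)
    have h2 : 0 < ({p : ℕ × ℕ | InSkew l n p.1 p.2 ∧ (p.1 < i ∨ (p.1 = i ∧ j ≤ p.2)) ∧
        T p.1 p.2 = k + 2}).ncard := (Set.ncard_pos hfin2).mpr hne
    have h1 : 0 < ({p : ℕ × ℕ | InSkew l n p.1 p.2 ∧ (p.1 < i ∨ (p.1 = i ∧ j ≤ p.2)) ∧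
        T p.1 p.2 = k + 1}).ncard := lt_of_lt_of_le h2 hlat
    obtain ⟨⟨i', j'⟩, hmem⟩ := Set.nonempty_of_ncard_ne_zero
      (s := {p : ℕ × ℕ | InSkew l n p.1 p.2 ∧ (p.1 < i ∨ (p.1 = i ∧ j ≤ p.2)) ∧
        T p.1 p.2 = k + 1}) (by omega)
    have hsk' : InSkew l n i' j' := hmem.1
    have hpref : i' < i ∨ (i' = i ∧ j ≤ j') := hmem.2.1
    have hT' : T i' j' = k + 1 := hmem.2.2
    rcases hpref with hlt | ⟨rfl, hj⟩
    · have := ih i' j' hsk' hT'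
      omega
    · exfalso
      have := h.2.1 i' j j' hsk hsk' hj
      omega

/-- For a Schur constituent, `μ ⊆ ν`. -/
theorem mu_le_nu (l m n : Partition') (h : IsSchurConstituent l m n) :
    ∀ k, m.part k ≤ n.part k := by
  obtain ⟨hsub, T, hLR⟩ := h
  intro k
  rcases Nat.eq_zero_or_pos (m.part k) with h0 | h0
  · omega
  have hcard : ({p : ℕ × ℕ | InSkew l n p.1 p.2 ∧ T p.1 p.2 = k + 1}).ncard = m.part k :=
    hLR.2.2.2.1 k
  have hcol : ∀ p ∈ {p : ℕ × ℕ | InSkew l n p.1 p.2 ∧ T p.1 p.2 = k + 1},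
      p.2 < n.part k := by
    rintro ⟨a, b⟩ hp
    have hsk : InSkew l n a b := hp.1
    have hT : T a b = k + 1 := hp.2
    have hk : k ≤ a := entry_row_ge l n m T hLR k a b hsk hT
    have h2 : b < n.part a := hsk.2
    exact lt_of_lt_of_le h2 (n.antitone hk)
  have hinj : Set.InjOn (fun p : ℕ × ℕ => p.2)
      {p : ℕ × ℕ | InSkew l n p.1 p.2 ∧ T p.1 p.2 = k + 1} := by
    rintro ⟨a1, a2⟩ ha ⟨b1, b2⟩ hb hab
    have hab' : a2 = b2 := hab
    subst hab'
    have ha1 : InSkew l n a1 a2 := ha.1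
    have hb1 : InSkew l n b1 a2 := hb.1
    have haT : T a1 a2 = k + 1 := ha.2
    have hbT : T b1 a2 = k + 1 := hb.2
    rcases lt_trichotomy a1 b1 with hlt | heq | hgt
    · have := hLR.2.2.1 a1 b1 a2 ha1 hb1 hlt; omega
    · rw [heq]
    · have := hLR.2.2.1 b1 a1 a2 hb1 ha1 hgt; omega
  have himg : (fun p : ℕ × ℕ => p.2) ''
      {p : ℕ × ℕ | InSkew l n p.1 p.2 ∧ T p.1 p.2 = k + 1} ⊆ Set.Iio (n.part k) := by
    rintro v ⟨p, hp, rfl⟩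
    exact hcol p hp
  have hle := Set.ncard_le_ncard himg (Set.finite_Iio _)
  rw [Set.ncard_image_of_injOn hinj, hcard, ncard_Iio] at hle
  exact hle

/-- Rectangle-with-tail partitions `((max M y)^x, y^m)`. -/
def rectP (x M y m : ℕ) : Partition' where
  part i := if i < x then max M y else if i < x + m then y else 0
  antitone := by
    intro i j hij
    split_ifs <;> omega
  eventually_zero := ⟨x + m, fun i hi => by split_ifs <;> omega⟩

theorem rectP_part (x M y m i : ℕ) :
    (rectP x M y m).part i = if i < x then max M y else if i < x + m then y else 0 := rfl

end SchurPrimeAux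

open SchurPrimeAux in
theorem Ixy_schurPrime_and_converse :
    (∀ x y : ℕ, IsSchurPrime {l : Partition' | y + 1 ≤ l.part x}) ∧
    (∀ I : Set Partition', I.Nonempty → IsPartitionIdeal I → IsSchurPrime I →
      ∃ x y : ℕ, I = {l : Partition' | y + 1 ≤ l.part x}) := by
  constructor
  · -- direction 1 : I_(x,y) is Schur prime
    intro x y
    constructor
    · intro h
      have h2 : zeroPart ∈ {l : Partition' | y + 1 ≤ l.part x} :=
        Set.eq_univ_iff_forall.mp h zeroPart
      simp only [Set.mem_setOf_eq, zeroPart] at h2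
      omega
    · intro l m hall
      by_contra hc
      push_neg at hc
      obtain ⟨hl, hm⟩ := hc
      simp only [Set.mem_setOf_eq, not_le] at hl hm
      have h := hall (nuP x l m) (nu_constituent x l m)
      simp only [Set.mem_setOf_eq] at h
      rw [nuP_part_x] at h
      omega
  · -- direction 2 : converse
    intro I hne hid hpr
    classical
    obtain ⟨hneq, hprime⟩ := hpr
    have hdown : ∀ a b : Partition', (∀ i, a.part i ≤ b.part i) → b ∉ I → a ∉ I :=
      fun a b hab hb ha => hb (hid a b ha hab)
    have hzero : zeroPart ∉ I := by
      intro h0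
      apply hneq
      ext p
      simp only [Set.mem_univ, iff_true]
      exact hid zeroPart p h0 (fun i => Nat.zero_le _)
    have hjoin : ∀ a b : Partition', a ∉ I → b ∉ I →
        ∃ w : Partition', w ∉ I ∧ (∀ i, a.part i ≤ w.part i) ∧
          (∀ i, b.part i ≤ w.part i) := by
      intro a b ha hb
      by_cases hall : ∀ n, IsSchurConstituent a b n → n ∈ I
      · rcases hprime a b hall with h | h
        · exact absurd h ha
        · exact absurd h hb
      · push_neg at hall
        obtain ⟨n, hcon, hn⟩ := hall
        exact ⟨n, hn, hcon.1, fun i => mu_le_nu a b n hcon i⟩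
    have hjoinN : ∀ (N : ℕ) (f : ℕ → ℕ),
        (∀ i, i < N → ∃ w : Partition', w ∉ I ∧ f i ≤ w.part i) →
        ∃ w : Partition', w ∉ I ∧ ∀ i, i < N → f i ≤ w.part i := by
      intro N
      induction N with
      | zero => exact fun f _ => ⟨zeroPart, hzero, fun i hi => (Nat.not_lt_zero i hi).elim⟩
      | succ N ihN =>
        intro f hf
        obtain ⟨w, hw, hwf⟩ := ihN f (fun i hi => hf i (by omega))
        obtain ⟨u, hu, huf⟩ := hf N (by omega)
        obtain ⟨v, hv, hva, hvb⟩ := hjoin w u hw hu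
        refine ⟨v, hv, fun i hi => ?_⟩
        rcases Nat.lt_or_ge i N with h | h
        · exact le_trans (hwf i h) (hva i)
        · have hiN : i = N := by omega
          rw [hiN]
          exact le_trans huf (hvb N)
    have hbdd : ∃ x : ℕ, ∃ b : ℕ, ∀ p : Partition', p ∉ I → p.part x ≤ b := by
      by_contra hc
      push_neg at hc
      obtain ⟨p0, hp0⟩ := hne
      obtain ⟨N, hN⟩ := p0.eventually_zero
      obtain ⟨w, hw, hwf⟩ := hjoinN N p0.part (fun i _ => by
        obtain ⟨p, hp, hplt⟩ := hc i (p0.part i)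
        exact ⟨p, hp, le_of_lt hplt⟩)
      exact (hdown p0 w (fun i => by
        rcases Nat.lt_or_ge i N with h | h
        · exact hwf i h
        · simp [hN i h]) hw) hp0
    set x := Nat.find hbdd with hxdef
    obtain ⟨bx, hbx⟩ : ∃ b : ℕ, ∀ p : Partition', p ∉ I → p.part x ≤ b := Nat.find_spec hbdd
    have hxmin : ∀ i, i < x → ∀ b : ℕ, ∃ p : Partition', p ∉ I ∧ b < p.part i := by
      intro i hi b
      have := Nat.find_min hbdd hi
      push_neg at this
      exact this b
    set S : Set ℕ := (fun p : Partition' => p.part x) '' {p | p ∉ I} with hSdef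
    have hSne : S.Nonempty := ⟨zeroPart.part x, zeroPart, hzero, rfl⟩
    have hSbdd : BddAbove S := by
      refine ⟨bx, ?_⟩
      rintro v ⟨p, hp, rfl⟩
      exact hbx p hp
    set y := sSup S with hydef
    have hley : ∀ p : Partition', p ∉ I → p.part x ≤ y :=
      fun p hp => le_csSup hSbdd ⟨p, hp, rfl⟩
    have hyatt : ∃ p : Partition', p ∉ I ∧ p.part x = y := by
      obtain ⟨p, hp, hpv⟩ := Nat.sSup_mem hSne hSbdd
      exact ⟨p, hp, hpv⟩
    -- (max M y)^x is not in I
    have hrect0 : ∀ M, rectP x M y 0 ∉ I := by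
      intro M
      obtain ⟨w, hw, hwf⟩ := hjoinN x (fun _ => max M y) (fun i hi => by
        obtain ⟨p, hp, hplt⟩ := hxmin i hi (max M y)
        exact ⟨p, hp, le_of_lt hplt⟩)
      apply hdown _ w _ hw
      intro i
      rw [rectP_part]
      split_ifs with h1 h2
      · exact hwf i h1
      · omega
      · exact Nat.zero_le _
    have hrect1 : ∀ M, rectP x M y 1 ∉ I := by
      intro M
      obtain ⟨p1, hp1, hp1x⟩ := hyatt
      obtain ⟨w, hw, hwf⟩ := hjoinN (x + 1) (fun i => if i < x then max M y else y)
        (fun i hi => by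
          by_cases hix : i < x
          · obtain ⟨p, hp, hplt⟩ := hxmin i hix (max M y)
            refine ⟨p, hp, ?_⟩
            simp only [if_pos hix]
            omega
          · have hix' : i = x := by omega
            subst hix'
            refine ⟨p1, hp1, ?_⟩
            simp only [if_neg hix]
            omega)
      apply hdown _ w _ hw
      intro i
      rw [rectP_part]
      split_ifs with h1 h2
      · have h3 := hwf i (by omega)
        simp only [if_pos h1] at h3
        exact h3
      · have h3 := hwf i (by omega)
        simp only [if_neg h1] at h3
        exact h3
      · exact Nat.zero_le _
    -- additivity of tail length
    have hadd : ∀ m m' : ℕ, 1 ≤ y → 1 ≤ m' →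
        (∀ M, rectP x M y m ∉ I) → (∀ M, rectP x M y m' ∉ I) →
        ∀ M, rectP x M y (m + m') ∉ I := by
      intro m m' hy hm'1 hm hm' M
      obtain ⟨ν, hν, hcon⟩ : ∃ n, n ∉ I ∧ IsSchurConstituent (rectP x M y m) (rectP x M y m') n := by
        by_cases hall : ∀ n, IsSchurConstituent (rectP x M y m) (rectP x M y m') n → n ∈ I
        · rcases hprime _ _ hall with h | h
          · exact absurd h (hm M)
          · exact absurd h (hm' M)
        · push_neg at hall
          obtain ⟨n, h1, h2⟩ := hall
          exact ⟨n, h2, h1⟩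
      obtain ⟨hsub, T, hLR⟩ := hcon
      have hνx : ν.part x ≤ y := hley ν hν
      -- for each s < m' there is a cell with entry x+s+1 in column y-1
      have hcell : ∀ s, s < m' →
          ∃ i, InSkew (rectP x M y m) ν i (y - 1) ∧ T i (y - 1) = (x + s) + 1 := by
        intro s hs
        have hEcard : ({p : ℕ × ℕ | InSkew (rectP x M y m) ν p.1 p.2 ∧
            T p.1 p.2 = (x + s) + 1}).ncard = y := by
          have hc := hLR.2.2.2.1 (x + s)
          rw [hc, rectP_part]
          rw [if_neg (by omega), if_pos (by omega)]
        have hEfin : ({p : ℕ × ℕ | InSkew (rectP x M y m) ν p.1 p.2 ∧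
            T p.1 p.2 = (x + s) + 1}).Finite := skew_finite _ _ _ (fun p hp => hp.1)
        have hcol : ∀ p ∈ {p : ℕ × ℕ | InSkew (rectP x M y m) ν p.1 p.2 ∧
            T p.1 p.2 = (x + s) + 1}, p.2 < y := by
          rintro ⟨a, b⟩ hp
          have hsk : InSkew (rectP x M y m) ν a b := hp.1
          have hT : T a b = (x + s) + 1 := hp.2
          have hrowge : x + s ≤ a :=
            entry_row_ge _ _ _ T hLR (x + s) a b hsk hT
          have h2 : b < ν.part a := hsk.2
          have h3 : ν.part a ≤ ν.part x := ν.antitone (by omega)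
          omega
        have hinj : Set.InjOn (fun p : ℕ × ℕ => p.2)
            {p : ℕ × ℕ | InSkew (rectP x M y m) ν p.1 p.2 ∧ T p.1 p.2 = (x + s) + 1} := by
          rintro ⟨a1, a2⟩ ha ⟨b1, b2⟩ hb hab
          have hab' : a2 = b2 := hab
          subst hab'
          have ha1 : InSkew (rectP x M y m) ν a1 a2 := ha.1
          have hb1 : InSkew (rectP x M y m) ν b1 a2 := hb.1
          have haT : T a1 a2 = (x + s) + 1 := ha.2
          have hbT : T b1 a2 = (x + s) + 1 := hb.2
          rcases lt_trichotomy a1 b1 with hlt | heq | hgt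
          · have := hLR.2.2.1 a1 b1 a2 ha1 hb1 hlt; omega
          · rw [heq]
          · have := hLR.2.2.1 b1 a1 a2 hb1 ha1 hgt; omega
        by_contra hcc
        push_neg at hcc
        have himg : (fun p : ℕ × ℕ => p.2) ''
            {p : ℕ × ℕ | InSkew (rectP x M y m) ν p.1 p.2 ∧ T p.1 p.2 = (x + s) + 1} ⊆
            Set.Iio (y - 1) := by
          rintro v ⟨⟨a1, a2⟩, ha, rfl⟩
          have h1 := hcol _ ha
          simp only [Set.mem_Iio]
          by_cases h2 : a2 = y - 1
          · exfalso
            subst h2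
            exact hcc a1 ha.1 ha.2
          · omega
        have hle := Set.ncard_le_ncard himg (Set.finite_Iio _)
        rw [Set.ncard_image_of_injOn hinj, hEcard, ncard_Iio] at hle
        omega
      choose ifn hif1 hif2 using hcell
      have hrows : ∀ s (hs : s < m'), x + m ≤ ifn s hs ∧ y ≤ ν.part (ifn s hs) := by
        intro s hs
        have h1 := hif1 s hs
        constructor
        · have hA : (rectP x M y m).part (ifn s hs) ≤ y - 1 := h1.1
          by_contra hcc
          push_neg at hcc
          have hA2 : y ≤ (rectP x M y m).part (ifn s hs) := by
            rw [rectP_part]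
            split_ifs <;> omega
          omega
        · have := h1.2
          omega
      have hfinal : y ≤ ν.part (x + m + m' - 1) := by
        by_contra hcc
        push_neg at hcc
        have hsubν : ∀ i, y ≤ ν.part i → i < x + m + m' - 1 := by
          intro i hi
          by_contra h3
          push_neg at h3
          have := ν.antitone h3
          omega
        -- counting argument via Finset
        have hmaps : ∀ t ∈ Finset.range (x + m + m'),
            (if h : x + m ≤ t ∧ t - (x + m) < m' then ifn (t - (x + m)) h.2 else t) ∈
              Finset.range (x + m + m' - 1) := by
          intro t ht
          simp only [Finset.mem_range] at ht ⊢
          split_ifs with h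
          · exact hsubν _ (hrows _ h.2).2
          · have hAt : y ≤ (rectP x M y m).part t := by
              rw [rectP_part]
              have htx : t < x + m := by omega
              split_ifs <;> omega
            have hν' : y ≤ ν.part t := le_trans hAt (hsub t)
            exact hsubν _ hν'
        have hinj2 : Set.InjOn
            (fun t => if h : x + m ≤ t ∧ t - (x + m) < m' then ifn (t - (x + m)) h.2 else t)
            ↑(Finset.range (x + m + m')) := by
          intro t ht t' ht' he
          simp only [Finset.coe_range, Set.mem_Iio] at ht ht'
          beta_reduce at he
          by_cases h : x + m ≤ t ∧ t - (x + m) < m' <;>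
            by_cases h' : x + m ≤ t' ∧ t' - (x + m) < m'
          · rw [dif_pos h, dif_pos h'] at he
            have e1 := hif1 _ h.2
            have e2 := hif1 _ h'.2
            have e3 := hif2 _ h.2
            have e4 := hif2 _ h'.2
            rw [he] at e3
            have : t - (x + m) = t' - (x + m) := by omega
            omega
          · rw [dif_pos h, dif_neg h'] at he
            have := (hrows _ h.2).1
            omega
          · rw [dif_neg h, dif_pos h'] at he
            have := (hrows _ h'.2).1
            omega
          · rw [dif_neg h, dif_neg h'] at he
            exact he
        have hcard := Finset.card_le_card_of_injOn _ hmaps hinj2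
        simp only [Finset.card_range] at hcard
        omega
      apply hdown _ ν _ hν
      intro i
      rw [rectP_part]
      split_ifs with h1 h2
      · have := hsub i
        rw [rectP_part, if_pos h1] at this
        exact this
      · have h3 : ν.part (x + m + m' - 1) ≤ ν.part i := by
          apply ν.antitone
          omega
        omega
      · exact Nat.zero_le _
    -- all rectangles avoid I
    have hrectm : ∀ mm M, rectP x M y mm ∉ I := by
      intro mm
      rcases Nat.eq_zero_or_pos y with hy | hy
      · intro M
        apply hdown _ (rectP x M y 0) _ (hrect0 M)
        intro i
        rw [rectP_part, rectP_part]
        split_ifs <;> omega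
      · induction mm with
        | zero => exact hrect0
        | succ mm ih =>
          rcases Nat.eq_zero_or_pos mm with h0 | h0
          · subst h0; exact hrect1
          · intro M
            have := hadd mm 1 hy (by omega) ih hrect1 M
            exact this
    -- final characterization
    have hJchar : ∀ p : Partition', p ∉ I ↔ p.part x ≤ y := by
      intro p
      constructor
      · exact hley p
      · intro hpx
        obtain ⟨N, hN⟩ := p.eventually_zero
        apply hdown p (rectP x (p.part 0) y (N + 1)) _ (hrectm (N + 1) (p.part 0))
        intro i
        rw [rectP_part]
        split_ifs with h1 h2
        · have := p.antitone (Nat.zero_le i)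
          omega
        · have := p.antitone (show x ≤ i by omega)
          omega
        · have := hN i (by omega)
          omega
    refine ⟨x, y, ?_⟩
    ext p
    simp only [Set.mem_setOf_eq]
    constructor
    · intro hp
      by_contra hc
      push_neg at hc
      exact (hJchar p).mpr (by omega) hp
    · intro hyp
      by_contra hp2
      have := (hJchar p).mp hp2
      omega
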